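/- Let A ∈ ℂ, A ≠ 0, and let G(t, u, v) be a formal power series in three variables over ℂ. Then the formal differential equation A·(t u' + u) = t · G(t, u, t u') has at most one solution u ∈ ℂ[[t]] with u(0) = 0, and such a solution exists; its coefficients are determined recursively: A(k+1) u_k equals a polynomial expression in u_1, …, u_{k−1} and the coefficients of G. -/

import Mathlib

open PowerSeries

/-- Substitution `G(t, u, t·u')` of `t`, a power series `u` with zero constant term,
and `t·u'` into a formal power series `G` in three variables, defined coefficientwise
(for `u` with zero constant term only finitely many monomials of `G` contribute to each
coefficient). -/
noncomputable def substG (G : MvPowerSeries (Fin 3) ℂ) (u : PowerSeries ℂ) :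
    PowerSeries ℂ :=
  PowerSeries.mk fun N =>
    ∑ i ∈ Finset.range (N + 1), ∑ j ∈ Finset.range (N + 1), ∑ k ∈ Finset.range (N + 1),
      MvPowerSeries.coeff (Finsupp.equivFunOnFinite.symm ![i, j, k]) G *
        PowerSeries.coeff N
          (PowerSeries.X ^ i * u ^ j * (PowerSeries.X * d⁄dX ℂ u) ^ k)

private lemma dvd_sub_mul' {R : Type*} [CommRing R] {d a a' b b' : R}
    (ha : d ∣ a - a') (hb : d ∣ b - b') : d ∣ a * b - a' * b' := by
  have : a * b - a' * b' = a * (b - b') + (a - a') * b' := by ring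
  rw [this]
  exact dvd_add (Dvd.dvd.mul_left hb a) (Dvd.dvd.mul_right ha b')

private lemma dvd_pow_sub {R : Type*} [CommRing R] {d a a' : R}
    (ha : d ∣ a - a') : ∀ j : ℕ, d ∣ a ^ j - a' ^ j
  | 0 => by simp
  | (j+1) => by
      rw [pow_succ, pow_succ]
      exact dvd_sub_mul' (dvd_pow_sub ha j) ha

lemma substG_congr (G : MvPowerSeries (Fin 3) ℂ) {u v : PowerSeries ℂ} {M : ℕ}
    (h : ∀ n ≤ M, PowerSeries.coeff n u = PowerSeries.coeff n v) :
    PowerSeries.coeff M (substG G u) = PowerSeries.coeff M (substG G v) := by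
  have hd : (PowerSeries.X : PowerSeries ℂ) ^ (M + 1) ∣ u - v := by
    rw [PowerSeries.X_pow_dvd_iff]
    intro m hm
    simp [h m (Nat.lt_succ_iff.mp hm)]
  have hD : (PowerSeries.X : PowerSeries ℂ) ^ (M + 1) ∣
      PowerSeries.X * d⁄dX ℂ u - PowerSeries.X * d⁄dX ℂ v := by
    rw [PowerSeries.X_pow_dvd_iff]
    intro m hm
    cases m with
    | zero => simp [mul_comm]
    | succ m =>
        rw [map_sub, PowerSeries.coeff_succ_X_mul, PowerSeries.coeff_succ_X_mul,
          PowerSeries.coeff_derivative, PowerSeries.coeff_derivative]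
        rw [h (m+1) (by omega)]
        ring
  simp only [substG, PowerSeries.coeff_mk]
  refine Finset.sum_congr rfl fun i _ => Finset.sum_congr rfl fun j _ =>
    Finset.sum_congr rfl fun k _ => ?_
  congr 1
  have key : (PowerSeries.X : PowerSeries ℂ) ^ (M + 1) ∣
      PowerSeries.X ^ i * u ^ j * (PowerSeries.X * d⁄dX ℂ u) ^ k -
      PowerSeries.X ^ i * v ^ j * (PowerSeries.X * d⁄dX ℂ v) ^ k := by
    exact dvd_sub_mul' (dvd_sub_mul' (by simp) (dvd_pow_sub hd j)) (dvd_pow_sub hD k)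
  have h0 := PowerSeries.X_pow_dvd_iff.mp key M (Nat.lt_succ_self M)
  rw [map_sub] at h0
  exact sub_eq_zero.mp h0

noncomputable def solCoeff (A : ℂ) (G : MvPowerSeries (Fin 3) ℂ) : ℕ → ℂ
  | 0 => 0
  | (N+1) =>
      (PowerSeries.coeff N (substG G
        (PowerSeries.mk fun n => if _ : n ≤ N then solCoeff A G n else 0))) / (A * (N + 2))
  termination_by n => n
  decreasing_by omega

lemma solCoeff_spec (A : ℂ) (hA : A ≠ 0) (G : MvPowerSeries (Fin 3) ℂ) (N : ℕ) :
    A * (N + 2) * solCoeff A G (N + 1) =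
      PowerSeries.coeff N (substG G (PowerSeries.mk (solCoeff A G))) := by
  have hcongr : PowerSeries.coeff N (substG G
      (PowerSeries.mk fun n => if _ : n ≤ N then solCoeff A G n else 0)) =
      PowerSeries.coeff N (substG G (PowerSeries.mk (solCoeff A G))) := by
    apply substG_congr
    intro n hn
    simp only [PowerSeries.coeff_mk]
    rw [dif_pos hn]
  rw [solCoeff, hcongr]
  have h2 : (A * (N + 2) : ℂ) ≠ 0 := by
    apply mul_ne_zero hA
    have : ((N + 2 : ℕ) : ℂ) ≠ 0 := Nat.cast_ne_zero.mpr (by omega)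
    push_cast at this
    exact this
  field_simp
  exact mul_div_cancel_left₀ _ (right_ne_zero_of_mul h2)

/-- For any solution of the ODE, the key coefficient recursion holds. -/
lemma sol_rec (A : ℂ) (G : MvPowerSeries (Fin 3) ℂ) {w : PowerSeries ℂ}
    (heq : A • (PowerSeries.X * d⁄dX ℂ w + w) = PowerSeries.X * substG G w) (N : ℕ) :
    A * (N + 2) * PowerSeries.coeff (N + 1) w =
      PowerSeries.coeff N (substG G w) := by
  have := congrArg (PowerSeries.coeff (N + 1)) heq
  rw [map_smul, map_add, PowerSeries.coeff_succ_X_mul, PowerSeries.coeff_succ_X_mul,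
    PowerSeries.coeff_derivative, smul_eq_mul] at this
  rw [← this]
  push_cast
  ring


/-- For `A ≠ 0` and a formal power series `G(t,u,v)` in three variables, the formal
differential equation `A·(t u' + u) = t · G(t, u, t u')` has exactly one solution
`u ∈ ℂ[[t]]` with `u(0) = 0`. -/
theorem stmt_12 (A : ℂ) (hA : A ≠ 0) (G : MvPowerSeries (Fin 3) ℂ) :
    ∃! u : PowerSeries ℂ, PowerSeries.constantCoeff u = 0 ∧
      A • (PowerSeries.X * d⁄dX ℂ u + u) = PowerSeries.X * substG G u := by
  have h2 : ∀ N : ℕ, (A * (N + 2) : ℂ) ≠ 0 := fun N => mul_ne_zero hA (by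
    have : ((N + 2 : ℕ) : ℂ) ≠ 0 := Nat.cast_ne_zero.mpr (by omega)
    push_cast at this
    exact this)
  refine ⟨PowerSeries.mk (solCoeff A G), ⟨?_, ?_⟩, ?_⟩
  · simp [PowerSeries.coeff_zero_eq_constantCoeff.symm, solCoeff]
  · ext N
    cases N with
    | zero =>
        rw [map_smul]
        simp [solCoeff, mul_comm]
    | succ N =>
        rw [map_smul, map_add, PowerSeries.coeff_succ_X_mul, PowerSeries.coeff_succ_X_mul,
          PowerSeries.coeff_derivative]
        simp only [PowerSeries.coeff_mk, smul_eq_mul]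
        rw [← solCoeff_spec A hA G N]
        push_cast
        ring
  · rintro v ⟨hv0, hveq⟩
    ext N
    induction N using Nat.strong_induction_on with
    | _ N ih =>
        cases N with
        | zero => simpa [solCoeff] using hv0
        | succ N =>
            have key : PowerSeries.coeff N (substG G v) =
                PowerSeries.coeff N (substG G (PowerSeries.mk (solCoeff A G))) :=
              substG_congr G fun n hn => ih n (by omega)
            have h1 := sol_rec A G hveq N
            rw [key, ← solCoeff_spec A hA G N] at h1
            have := mul_left_cancel₀ (h2 N) h1
            simpa using this
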